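/- Let A : H → H be a positive semi-definite self-adjoint linear map on a Euclidean space H, and let v_1, ..., v_d be vectors in a d-dimensional subspace (or H_j of dimension d) with |⋀_{i=1}^d v_i| ≥ c > 0. Then det(A) ≤ c^{-2} · ∏_{i=1}^d ⟨A v_i, v_i⟩. -/

import Mathlib

open scoped RealInnerProductSpace

theorem hadamard_col (d : ℕ) (w : Fin d → EuclideanSpace ℝ (Fin d)) :
    |Matrix.det (Matrix.of fun i j : Fin d => w j i)| ≤ ∏ i, ‖w i‖ := by
  haveI : Fact (Module.finrank ℝ (EuclideanSpace ℝ (Fin d)) = d) :=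
    ⟨finrank_euclideanSpace_fin⟩
  let b : OrthonormalBasis (Fin d) ℝ (EuclideanSpace ℝ (Fin d)) :=
    EuclideanSpace.basisFun (Fin d) ℝ
  let o := b.toBasis.orientation
  have h1 := o.abs_volumeForm_apply_le w
  have h2 := o.volumeForm_robust' b w
  have h3 : b.toBasis.det w = Matrix.det (Matrix.of fun i j : Fin d => w j i) := by
    rw [Module.Basis.det_apply]; rfl
  rw [h2, h3] at h1
  exact h1


/-- Determinant of a positive semi-definite map bounded by the product of its
"diagonal entries" in a (possibly non-orthonormal) basis `v₁, ..., v_d`, with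
`|⋀ v_i| ≥ c` entering as the factor `c⁻²`. -/
theorem det_le_prod_inner_of_wedge_lower_bound
    (d : ℕ) (A : EuclideanSpace ℝ (Fin d) →ₗ[ℝ] EuclideanSpace ℝ (Fin d))
    (hsym : A.IsSymmetric) (hpos : ∀ x, 0 ≤ ⟪A x, x⟫)
    (v : Fin d → EuclideanSpace ℝ (Fin d)) (c : ℝ) (hc : 0 < c)
    (hv : c ≤ |Matrix.det (Matrix.of fun i j : Fin d => v j i)|) :
    LinearMap.det A ≤ c⁻¹ ^ 2 * ∏ i, ⟪A (v i), v i⟫ := by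
  have hn : Module.finrank ℝ (EuclideanSpace ℝ (Fin d)) = d := finrank_euclideanSpace_fin
  set e := hsym.eigenvectorBasis hn with he
  set μ := hsym.eigenvalues hn with hμdef
  have hee : ∀ i j, ⟪e i, e j⟫ = if i = j then 1 else 0 := by
    intro i j
    rcases eq_or_ne i j with rfl | h
    · rw [if_pos rfl, real_inner_self_eq_norm_mul_norm, e.orthonormal.1 i]; norm_num
    · rw [if_neg h]; exact e.orthonormal.2 h
  have hμ : ∀ i, 0 ≤ μ i := by
    intro i
    have h := hpos (e i)
    rw [hsym.apply_eigenvectorBasis hn i, real_inner_smul_left, hee i i] at h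
    simpa using h
  -- square root of A
  set B : EuclideanSpace ℝ (Fin d) →ₗ[ℝ] EuclideanSpace ℝ (Fin d) :=
    e.toBasis.constr ℝ (fun i => Real.sqrt (μ i) • e i) with hBdef
  have hBe : ∀ i, B (e i) = Real.sqrt (μ i) • e i := by
    intro i
    have := e.toBasis.constr_basis ℝ (fun i => Real.sqrt (μ i) • e i) i
    simpa [hBdef] using this
  have hBB : B ∘ₗ B = A := by
    apply e.toBasis.ext
    intro i
    simp only [LinearMap.comp_apply, OrthonormalBasis.coe_toBasis, hBe, map_smul, smul_smul,
      Real.mul_self_sqrt (hμ i)]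
    rw [hsym.apply_eigenvectorBasis hn i]
    norm_num
    rfl
  have hBsym : ∀ x y, ⟪B x, y⟫ = ⟪x, B y⟫ := by
    intro x y
    rw [← e.sum_repr x, ← e.sum_repr y]
    simp only [map_sum, map_smul, hBe, smul_smul, sum_inner, inner_sum, real_inner_smul_left,
      real_inner_smul_right, hee]
    rw [Finset.sum_comm]
    congr 1; ext i; congr 1; ext j
    rcases eq_or_ne i j with rfl | h
    · simp; ring
    · simp [h, Ne.symm h]
  have hAvv : ∀ i, ⟪A (v i), v i⟫ = ‖B (v i)‖ ^ 2 := by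
    intro i
    rw [← hBB]
    simp only [LinearMap.comp_apply]
    rw [hBsym, real_inner_self_eq_norm_sq]
  -- matrices
  set bE := (EuclideanSpace.basisFun (Fin d) ℝ).toBasis with hbE
  set MB := LinearMap.toMatrix bE bE B with hMB
  set V : Matrix (Fin d) (Fin d) ℝ := Matrix.of fun i j => v j i with hV
  have hdetB : LinearMap.det B = MB.det := (LinearMap.det_toMatrix bE B).symm
  have hprod : MB * V = Matrix.of fun i j => B (v j) i := by
    ext i j
    have h2 := congrFun (LinearMap.toMatrix_mulVec_repr bE bE B (v j)) i
    simp only [Matrix.mulVec, dotProduct, hbE, EuclideanSpace.basisFun_toBasis,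
      PiLp.basisFun_repr] at h2
    simp only [Matrix.mul_apply, Matrix.of_apply, hV, hMB, hbE, Matrix.of_apply,
      EuclideanSpace.basisFun_toBasis]
    exact h2
  have hHad := hadamard_col d (fun i => B (v i))
  have hdet2 : MB.det * V.det = Matrix.det (Matrix.of fun i j => B (v j) i) := by
    rw [← Matrix.det_mul, hprod]
  have hA : LinearMap.det A = LinearMap.det B * LinearMap.det B := by
    rw [← hBB, LinearMap.det_comp]
  have hkey : LinearMap.det A * V.det ^ 2 ≤ ∏ i, ⟪A (v i), v i⟫ := by
    have h1 : |MB.det * V.det| ≤ ∏ i, ‖B (v i)‖ := by rw [hdet2]; exact hHad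
    have h2 : (MB.det * V.det) ^ 2 ≤ (∏ i, ‖B (v i)‖) ^ 2 := by
      rw [← sq_abs]
      exact pow_le_pow_left₀ (abs_nonneg _) h1 2
    calc LinearMap.det A * V.det ^ 2 = (MB.det * V.det) ^ 2 := by
          rw [hA, hdetB]; ring
      _ ≤ (∏ i, ‖B (v i)‖) ^ 2 := h2
      _ = ∏ i, ⟪A (v i), v i⟫ := by
          rw [← Finset.prod_pow]
          exact Finset.prod_congr rfl fun i _ => (hAvv i).symm
  have hdetA : 0 ≤ LinearMap.det A := by rw [hA]; exact mul_self_nonneg _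
  have hc2 : c ^ 2 ≤ V.det ^ 2 := by
    rw [← sq_abs V.det]
    exact pow_le_pow_left₀ hc.le hv 2
  have hP : 0 ≤ ∏ i, ⟪A (v i), v i⟫ := Finset.prod_nonneg fun i _ => hpos (v i)
  rw [inv_pow, le_inv_mul_iff₀ (by positivity : (0:ℝ) < c ^ 2)]
  nlinarith [mul_le_mul_of_nonneg_left hc2 hdetA]
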